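/- Under hypotheses (C1)–(C6), the operator T defined by Tu(t) := η1 γ1(t) h1[u] + η2 γ2(t) h2[u] + λ ∫₀¹ k(t,s) f(s, u(s), u'(s)) ds maps the cone P into itself; that is, for every u ∈ P, the function Tu belongs to C¹[0,1] and satisfies (Tu)(t) ≥ 0 and (Tu)'(t) ≥ 0 for every t ∈ [0,1]. -/

import Mathlib

open MeasureTheory Set Bornology

noncomputable section

/-- The interval `[0,1]`. -/
abbrev I01 : Set ℝ := Set.Icc 0 1

/-- The space `C[0,1] × C[0,1]`; an element of `C¹[0,1]` is encoded as the pair `(u, u')`.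
The product norm is exactly `‖(u,u')‖ = max {‖u‖_∞, ‖u'‖_∞}`. -/
abbrev E := C(I01, ℝ) × C(I01, ℝ)

/-- The extension to `ℝ` of a continuous function on `[0,1]` (constant outside `[0,1]`). -/
def ext01 (g : C(I01, ℝ)) : ℝ → ℝ := Set.IccExtend zero_le_one ⇑g

/-- `p = (u, u')` encodes a `C¹` function: `u'` is the derivative of `u` on `[0,1]`. -/
def IsC1 (p : E) : Prop :=
  ∀ t : I01, HasDerivWithinAt (ext01 p.1) (p.2 t) I01 (t : ℝ)

/-- The cone `P` of non-negative `C¹[0,1]` functions with non-negative derivative. -/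
def coneP : Set E :=
  {p | IsC1 p ∧ ∀ t : I01, 0 ≤ p.1 t ∧ 0 ≤ p.2 t}

open Filter in
/-- The punctured neighborhood filter within `[0,1]` is non-trivial. -/
lemma neBot_aux {t : ℝ} (ht : t ∈ I01) : (nhdsWithin t (I01 \ {t})).NeBot := by
  rcases lt_or_eq_of_le ht.2 with h | h
  · have h1 : nhdsWithin t (Ioc t 1) ≤ nhdsWithin t (I01 \ {t}) :=
      nhdsWithin_mono _ (fun x hx => ⟨⟨le_trans ht.1 hx.1.le, hx.2⟩, ne_of_gt hx.1⟩)
    haveI : (nhdsWithin t (Ioc t 1)).NeBot := by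
      rw [nhdsWithin_Ioc_eq_nhdsGT h]; infer_instance
    exact Filter.neBot_of_le h1
  · have h1 : nhdsWithin t (Ico 0 t) ≤ nhdsWithin t (I01 \ {t}) :=
      nhdsWithin_mono _ (fun x hx => ⟨⟨hx.1, hx.2.le.trans ht.2⟩, ne_of_lt hx.2⟩)
    haveI : (nhdsWithin t (Ico 0 t)).NeBot := by
      rw [nhdsWithin_Ico_eq_nhdsLT (show (0:ℝ) < t by rw [h]; norm_num)]
      infer_instance
    exact Filter.neBot_of_le h1

theorem T_maps_cone_into_cone
    (k kt : ℝ → ℝ → ℝ) (Φ Ψ : ℝ → ℝ) (f : ℝ → ℝ → ℝ → ℝ)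
    (γ₁ γ₂ γ₁' γ₂' : ℝ → ℝ) (η₁ η₂ lam : ℝ) (h₁ h₂ : E → ℝ)
    -- (C₁)
    (hk_meas : Measurable (Function.uncurry k))
    (hk_cont : ∀ᵐ s ∂(volume.restrict I01), ContinuousOn (fun t => k t s) I01)
    (hk_nonneg : ∀ t ∈ I01, ∀ s ∈ I01, 0 ≤ k t s)
    (hΦ : IntegrableOn Φ I01)
    (hkΦ : ∀ᵐ s ∂(volume.restrict I01), ∀ t ∈ I01, k t s ≤ Φ s)
    -- (C₂)
    (hkt : ∀ᵐ s ∂(volume.restrict I01),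
      (∀ t ∈ I01, HasDerivWithinAt (fun x => k x s) (kt t s) I01 t) ∧
      ContinuousOn (fun t => kt t s) I01 ∧
      ∀ t ∈ I01, 0 ≤ kt t s ∧ kt t s ≤ Ψ s)
    (hΨ : IntegrableOn Ψ I01)
    -- (C₃)
    (hf_cont : ContinuousOn (fun x : ℝ × ℝ × ℝ => f x.1 x.2.1 x.2.2)
      (I01 ×ˢ Ici (0:ℝ) ×ˢ Ici (0:ℝ)))
    (hf_nonneg : ∀ t ∈ I01, ∀ u ∈ Ici (0:ℝ), ∀ v ∈ Ici (0:ℝ), 0 ≤ f t u v)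
    -- (C₄)
    (hγ₁ : ∀ t ∈ I01, HasDerivWithinAt γ₁ (γ₁' t) I01 t)
    (hγ₂ : ∀ t ∈ I01, HasDerivWithinAt γ₂ (γ₂' t) I01 t)
    (hγ₁'c : ContinuousOn γ₁' I01) (hγ₂'c : ContinuousOn γ₂' I01)
    (hγ_nonneg : ∀ t ∈ I01, 0 ≤ γ₁ t ∧ 0 ≤ γ₂ t ∧ 0 ≤ γ₁' t ∧ 0 ≤ γ₂' t)
    -- (C₅)
    (hη₁ : 0 ≤ η₁) (hη₂ : 0 ≤ η₂) (hlam : 0 ≤ lam)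
    -- (C₆)
    (hh₁_nonneg : ∀ p ∈ coneP, 0 ≤ h₁ p) (hh₂_nonneg : ∀ p ∈ coneP, 0 ≤ h₂ p)
    (hh₁_cont : ContinuousOn h₁ coneP) (hh₂_cont : ContinuousOn h₂ coneP)
    (hh₁_bdd : ∀ B ⊆ coneP, IsBounded B → IsBounded (h₁ '' B))
    (hh₂_bdd : ∀ B ⊆ coneP, IsBounded B → IsBounded (h₂ '' B)) :
    ∀ p ∈ coneP, ∃ q ∈ coneP,
      (∀ t : I01, q.1 t = η₁ * γ₁ (t : ℝ) * h₁ p + η₂ * γ₂ (t : ℝ) * h₂ p +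
        lam * ∫ s in (0:ℝ)..1, k (t : ℝ) s * f s (ext01 p.1 s) (ext01 p.2 s)) ∧
      (∀ t : I01, q.2 t = η₁ * γ₁' (t : ℝ) * h₁ p + η₂ * γ₂' (t : ℝ) * h₂ p +
        lam * ∫ s in (0:ℝ)..1, kt (t : ℝ) s * f s (ext01 p.1 s) (ext01 p.2 s)) := by
  intro p hp
  set μ : Measure ℝ := volume.restrict I01 with hμ
  set g : ℝ → ℝ := fun s => f s (ext01 p.1 s) (ext01 p.2 s) with hg
  -- basic facts about `g`
  have hext1 : Continuous (ext01 p.1) := Continuous.Icc_extend' p.1.continuous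
  have hext2 : Continuous (ext01 p.2) := Continuous.Icc_extend' p.2.continuous
  have hextnn1 : ∀ s, 0 ≤ ext01 p.1 s := fun s => (hp.2 _).1
  have hextnn2 : ∀ s, 0 ≤ ext01 p.2 s := fun s => (hp.2 _).2
  have gcont : ContinuousOn g I01 := by
    have : ContinuousOn ((fun x : ℝ × ℝ × ℝ => f x.1 x.2.1 x.2.2) ∘
        (fun s => (s, ext01 p.1 s, ext01 p.2 s))) I01 :=
      hf_cont.comp ((continuous_id.prodMk (hext1.prodMk hext2)).continuousOn)
        (fun s hs => ⟨hs, hextnn1 s, hextnn2 s⟩)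
    exact this
  have gnn : ∀ s ∈ I01, 0 ≤ g s := fun s hs =>
    hf_nonneg s hs _ (hextnn1 s) _ (hextnn2 s)
  have gmeas : AEStronglyMeasurable g μ := gcont.aestronglyMeasurable measurableSet_Icc
  obtain ⟨M₀, hM₀⟩ := isCompact_Icc.exists_bound_of_continuousOn gcont
  set M : ℝ := max M₀ 0 with hMdef
  have hM : ∀ s ∈ I01, ‖g s‖ ≤ M := fun s hs => le_trans (hM₀ s hs) (le_max_left _ _)
  have hM0 : 0 ≤ M := le_max_right _ _
  have hmem : ∀ᵐ s ∂μ, s ∈ I01 := ae_restrict_mem measurableSet_Icc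
  -- measurability of the sections of k
  have kmeas : ∀ b : ℝ, Measurable (fun s => k b s) := fun b =>
    hk_meas.comp measurable_prodMk_left
  -- integrability of `k t · * g`
  have hint : ∀ t ∈ I01, Integrable (fun s => k t s * g s) μ := by
    intro t ht
    refine Integrable.mono' (hΦ.mul_const M) ((kmeas t).aestronglyMeasurable.mul gmeas) ?_
    filter_upwards [hmem, hkΦ] with s hs hΦs
    have h0 : 0 ≤ k t s := hk_nonneg t ht s hs
    rw [norm_mul, Real.norm_eq_abs, abs_of_nonneg h0]
    exact mul_le_mul (hΦs t ht) (hM s hs) (norm_nonneg _) (le_trans h0 (hΦs t ht))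
  -- a.e. properties of Ψ
  have hΨnn : ∀ᵐ s ∂μ, 0 ≤ Ψ s := by
    filter_upwards [hkt] with s hs
    have := hs.2.2 0 ⟨le_refl 0, zero_le_one⟩
    linarith [this.1, this.2]
  -- measurability of the sections of kt
  have ktmeas : ∀ t ∈ I01, AEStronglyMeasurable (fun s => kt t s) μ := by
    intro t ht
    haveI := neBot_aux ht
    obtain ⟨x, hx⟩ := Filter.exists_seq_tendsto (nhdsWithin t (I01 \ {t}))
    refine aestronglyMeasurable_of_tendsto_ae Filter.atTop
      (f := fun n s => (k (x n) s - k t s) / (x n - t)) (fun n =>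
        (((kmeas (x n)).sub (kmeas t)).div_const _).aestronglyMeasurable) ?_
    filter_upwards [hkt] with s hs
    have h1 := (hasDerivWithinAt_iff_tendsto_slope.mp (hs.1 t ht)).comp hx
    refine h1.congr (fun n => ?_)
    simp [Function.comp, slope_def_field]
  -- integrability of `kt t · * g`
  have hint' : ∀ t ∈ I01, Integrable (fun s => kt t s * g s) μ := by
    intro t ht
    refine Integrable.mono' (hΨ.mul_const M) ((ktmeas t ht).mul gmeas) ?_
    filter_upwards [hmem, hkt] with s hs hkts
    have h0 := (hkts.2.2 t ht).1
    rw [norm_mul, Real.norm_eq_abs, abs_of_nonneg h0]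
    exact mul_le_mul (hkts.2.2 t ht).2 (hM s hs) (norm_nonneg _)
      (le_trans h0 (hkts.2.2 t ht).2)
  set K : ℝ → ℝ := fun t => ∫ s, k t s * g s ∂μ with hK
  set K' : ℝ → ℝ := fun t => ∫ s, kt t s * g s ∂μ with hK'
  -- the key differentiation under the integral sign
  have hKderiv : ∀ t ∈ I01, HasDerivWithinAt K (K' t) I01 t := by
    intro t ht
    rw [hasDerivWithinAt_iff_tendsto_slope, Filter.tendsto_iff_seq_tendsto]
    intro x hx
    have hxev : ∀ᶠ n in Filter.atTop, x n ∈ I01 \ {t} :=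
      hx.eventually eventually_mem_nhdsWithin
    set y : ℕ → ℝ := fun n => if x n ∈ I01 \ {t} then x n else t with hy
    have hyx : y =ᶠ[Filter.atTop] x := by
      filter_upwards [hxev] with n hn
      show (if x n ∈ I01 \ {t} then x n else t) = x n
      rw [if_pos hn]
    have hymem : ∀ n, y n ∈ I01 := by
      intro n
      by_cases hn : x n ∈ I01 \ {t}
      · simp only [hy, if_pos hn]; exact hn.1
      · simp only [hy, if_neg hn]; exact ht
    have hy_tend : Filter.Tendsto y Filter.atTop (nhdsWithin t (I01 \ {t})) :=
      hx.congr' hyx.symm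
    -- the slope of K written as an integral
    have claim : ∀ b ∈ I01, slope K t b =
        ∫ s, (k b s - k t s) / (b - t) * g s ∂μ := by
      intro b hb
      have : (fun s => (k b s - k t s) / (b - t) * g s) =
          fun s => (b - t)⁻¹ * (k b s * g s - k t s * g s) := by
        funext s; ring
      rw [slope_def_field, this, integral_const_mul,
        integral_sub (hint b hb) (hint t ht)]
      rw [div_eq_inv_mul]
    -- dominated convergence for the difference quotients
    have main : Filter.Tendsto
        (fun n => ∫ s, (k (y n) s - k t s) / (y n - t) * g s ∂μ)
        Filter.atTop (nhds (K' t)) := by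
      refine tendsto_integral_of_dominated_convergence (fun s => Ψ s * M)
        (fun n => (((kmeas (y n)).sub (kmeas t)).div_const _).aestronglyMeasurable.mul gmeas)
        (hΨ.mul_const M) ?_ ?_
      · intro n
        filter_upwards [hmem, hkt] with s hs hkts
        have hΨs : 0 ≤ Ψ s := le_trans (hkts.2.2 t ht).1 (hkts.2.2 t ht).2
        by_cases hbt : y n = t
        · simp only [hbt, sub_self, zero_div, zero_mul, norm_zero]
          exact mul_nonneg hΨs hM0
        · have hlip : ‖k (y n) s - k t s‖ ≤ Ψ s * ‖y n - t‖ := by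
            refine Convex.norm_image_sub_le_of_norm_hasDerivWithin_le
              (f' := fun τ => kt τ s) (fun τ hτ => hkts.1 τ hτ) ?_
              (convex_Icc 0 1) ht (hymem n)
            intro τ hτ
            rw [Real.norm_eq_abs, abs_of_nonneg (hkts.2.2 τ hτ).1]
            exact (hkts.2.2 τ hτ).2
          have hne : ‖y n - t‖ ≠ 0 := by
            simp only [ne_eq, norm_eq_zero, sub_eq_zero]; exact hbt
          rw [norm_mul, norm_div]
          refine mul_le_mul ?_ (hM s hs) (norm_nonneg _) hΨs
          rw [div_le_iff₀ (lt_of_le_of_ne (norm_nonneg _) (Ne.symm hne))]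
          exact hlip
      · filter_upwards [hkt] with s hs
        have h1 := (hasDerivWithinAt_iff_tendsto_slope.mp (hs.1 t ht)).comp hy_tend
        have h2 : Filter.Tendsto (fun n => (k (y n) s - k t s) / (y n - t))
            Filter.atTop (nhds (kt t s)) := by
          refine h1.congr (fun n => ?_)
          simp [Function.comp, slope_def_field]
        exact h2.mul_const (g s)
    refine main.congr' ?_
    filter_upwards [hyx] with n hn
    rw [← claim (y n) (hymem n), hn, Function.comp_apply]
  -- continuity of K and K'
  have hKcont : ContinuousOn K I01 := fun t ht => (hKderiv t ht).continuousWithinAt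
  have hK'cont : ContinuousOn K' I01 := by
    refine continuousOn_of_dominated (bound := fun s => Ψ s * M)
      (fun t ht => (ktmeas t ht).mul gmeas) ?_ (hΨ.mul_const M) ?_
    · intro t ht
      filter_upwards [hmem, hkt] with s hs hkts
      have h0 := (hkts.2.2 t ht).1
      rw [norm_mul, Real.norm_eq_abs, abs_of_nonneg h0]
      exact mul_le_mul (hkts.2.2 t ht).2 (hM s hs) (norm_nonneg _)
        (le_trans h0 (hkts.2.2 t ht).2)
    · filter_upwards [hkt] with s hs
      exact hs.2.1.mul continuousOn_const
  -- nonnegativity of K and K'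
  have hKnn : ∀ t ∈ I01, 0 ≤ K t := by
    intro t ht
    refine integral_nonneg_of_ae ?_
    filter_upwards [hmem] with s hs
    exact mul_nonneg (hk_nonneg t ht s hs) (gnn s hs)
  have hK'nn : ∀ t ∈ I01, 0 ≤ K' t := by
    intro t ht
    refine integral_nonneg_of_ae ?_
    filter_upwards [hmem, hkt] with s hs hkts
    exact mul_nonneg (hkts.2.2 t ht).1 (gnn s hs)
  -- the functions A := Tu and B := (Tu)'
  set A : ℝ → ℝ := fun t => η₁ * γ₁ t * h₁ p + η₂ * γ₂ t * h₂ p + lam * K t with hA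
  set B : ℝ → ℝ := fun t => η₁ * γ₁' t * h₁ p + η₂ * γ₂' t * h₂ p + lam * K' t with hB
  have hγ₁c : ContinuousOn γ₁ I01 := fun t ht => (hγ₁ t ht).continuousWithinAt
  have hγ₂c : ContinuousOn γ₂ I01 := fun t ht => (hγ₂ t ht).continuousWithinAt
  have hAcont : ContinuousOn A I01 := by
    exact (((continuousOn_const.mul hγ₁c).mul continuousOn_const).add
      ((continuousOn_const.mul hγ₂c).mul continuousOn_const)).add
      (continuousOn_const.mul hKcont)
  have hBcont : ContinuousOn B I01 := by
    exact (((continuousOn_const.mul hγ₁'c).mul continuousOn_const).add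
      ((continuousOn_const.mul hγ₂'c).mul continuousOn_const)).add
      (continuousOn_const.mul hK'cont)
  have hAB : ∀ t ∈ I01, HasDerivWithinAt A (B t) I01 t := by
    intro t ht
    exact ((((hγ₁ t ht).const_mul η₁).mul_const (h₁ p)).add
      (((hγ₂ t ht).const_mul η₂).mul_const (h₂ p))).add
      ((hKderiv t ht).const_mul lam)
  refine ⟨(⟨I01.restrict A, hAcont.restrict⟩, ⟨I01.restrict B, hBcont.restrict⟩), ⟨?_, ?_⟩, ?_, ?_⟩
  · -- IsC1
    intro t
    have heq : ∀ x ∈ I01, ext01 ⟨I01.restrict A, hAcont.restrict⟩ x = A x := by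
      intro x hx
      simp only [ext01]
      rw [Set.IccExtend_of_mem _ _ hx]
      rfl
    exact (hAB t t.2).congr heq (heq t t.2)
  · -- nonnegativity
    intro t
    constructor
    · refine add_nonneg (add_nonneg ?_ ?_) ?_
      · exact mul_nonneg (mul_nonneg hη₁ (hγ_nonneg t t.2).1) (hh₁_nonneg p hp)
      · exact mul_nonneg (mul_nonneg hη₂ (hγ_nonneg t t.2).2.1) (hh₂_nonneg p hp)
      · exact mul_nonneg hlam (hKnn t t.2)
    · refine add_nonneg (add_nonneg ?_ ?_) ?_
      · exact mul_nonneg (mul_nonneg hη₁ (hγ_nonneg t t.2).2.2.1) (hh₁_nonneg p hp)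
      · exact mul_nonneg (mul_nonneg hη₂ (hγ_nonneg t t.2).2.2.2) (hh₂_nonneg p hp)
      · exact mul_nonneg hlam (hK'nn t t.2)
  · -- formula for q.1
    intro t
    have hIoc : (volume : Measure ℝ).restrict (Ioc 0 1) = μ :=
      Measure.restrict_congr_set Ioc_ae_eq_Icc
    show A (t : ℝ) = _
    rw [intervalIntegral.integral_of_le zero_le_one, hIoc]
  · -- formula for q.2
    intro t
    have hIoc : (volume : Measure ℝ).restrict (Ioc 0 1) = μ :=
      Measure.restrict_congr_set Ioc_ae_eq_Icc
    show B (t : ℝ) = _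
    rw [intervalIntegral.integral_of_le zero_le_one, hIoc]
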